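/- Let λ ≥ 0 be real, x₀ > 0, and let v : (0,x₀] → ℝ be twice differentiable and bounded with (1/2)x²v''(x) + x v'(x) − (1+λ)v(x) = 0 for all x ∈ (0,x₀]. Then there exists a real constant C₁ such that v(x) = C₁ x^{m̄(λ)} for all x ∈ (0,x₀]. -/

import Mathlib

/-- The indicial root `m̄(λ) = (-1 + √(9+8λ))/2`. -/
noncomputable def mUp (lam : ℝ) : ℝ := (-1 + Real.sqrt (9 + 8 * lam)) / 2

/-- The indicial root `m̲(λ) = (-1 - √(9+8λ))/2`. -/
noncomputable def mDown (lam : ℝ) : ℝ := (-1 - Real.sqrt (9 + 8 * lam)) / 2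

/-- Auxiliary: a function with vanishing derivative on `(0, x₀]` is constant there. -/
lemma const_on_Ioc' {x₀ : ℝ} (_hx₀ : 0 < x₀) (f : ℝ → ℝ)
    (hf : ∀ x ∈ Set.Ioc (0:ℝ) x₀, HasDerivAt f 0 x) :
    ∀ x ∈ Set.Ioc (0:ℝ) x₀, f x = f x₀ := by
  intro x hx
  rcases eq_or_lt_of_le hx.2 with h | h
  · rw [h]
  · have hcont : ContinuousOn f (Set.Icc x x₀) := fun y hy =>
      ((hf y ⟨lt_of_lt_of_le hx.1 hy.1, hy.2⟩).continuousAt).continuousWithinAt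
    have hderiv : ∀ y ∈ Set.Ioo x x₀, HasDerivAt f ((fun _ => (0:ℝ)) y) y := fun y hy =>
      hf y ⟨hx.1.trans hy.1, hy.2.le⟩
    obtain ⟨c, -, hc⟩ := exists_hasDerivAt_eq_slope f _ h hcont hderiv
    have h0 : (f x₀ - f x) / (x₀ - x) = 0 := hc.symm
    have hne : x₀ - x ≠ 0 := sub_ne_zero.mpr h.ne'
    field_simp at h0
    linarith

/-- **Bounded homogeneous solutions of the Euler equation.** If `v` is twice
differentiable and bounded on `(0, x₀]` and satisfies
`(1/2)x²v'' + x v' - (1+λ)v = 0` there, then `v(x) = C₁ x^{m̄(λ)}` on `(0, x₀]`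
for some constant `C₁`. -/
theorem euler_bounded_homogeneous_solutions (lam : ℝ) (hlam : 0 ≤ lam)
    (x₀ : ℝ) (hx₀ : 0 < x₀) (v : ℝ → ℝ)
    (hv1 : ∀ x ∈ Set.Ioc (0:ℝ) x₀, DifferentiableAt ℝ v x)
    (hv2 : ∀ x ∈ Set.Ioc (0:ℝ) x₀, DifferentiableAt ℝ (deriv v) x)
    (hbdd : ∃ M : ℝ, ∀ x ∈ Set.Ioc (0:ℝ) x₀, |v x| ≤ M)
    (hode : ∀ x ∈ Set.Ioc (0:ℝ) x₀,
      (1/2) * x^2 * deriv (deriv v) x + x * deriv v x - (1 + lam) * v x = 0) :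
    ∃ C₁ : ℝ, ∀ x ∈ Set.Ioc (0:ℝ) x₀, v x = C₁ * x ^ mUp lam := by
  obtain ⟨M, hM⟩ := hbdd
  set s : ℝ := Real.sqrt (9 + 8 * lam) with hs_def
  have hs2 : s ^ 2 = 9 + 8 * lam := Real.sq_sqrt (by linarith)
  have hs3 : 3 ≤ s := by
    nlinarith [Real.sqrt_nonneg (9 + 8 * lam)]
  set a : ℝ := mUp lam with ha_def
  set b : ℝ := mDown lam with hb_def
  have hab : a + b = -1 := by simp [ha_def, hb_def, mUp, mDown]; ring
  have hmul : a * b = -(2 * (1 + lam)) := by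
    simp only [ha_def, hb_def, mUp, mDown, ← hs_def]
    nlinarith [hs2]
  have ha1 : 1 ≤ a := by simp only [ha_def, mUp, ← hs_def]; linarith
  have hb2 : b ≤ -2 := by simp only [hb_def, mDown, ← hs_def]; linarith
  have ha0 : 0 < a := by linarith
  -- the auxiliary function u = x v' - b v
  set u : ℝ → ℝ := fun x => x * deriv v x - b * v x with hu_def
  have hu : ∀ x ∈ Set.Ioc (0:ℝ) x₀, HasDerivAt u (a * u x / x) x := by
    intro x hx
    have hxpos : (0:ℝ) < x := hx.1
    have h1 : HasDerivAt v (deriv v x) x := (hv1 x hx).hasDerivAt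
    have h2 : HasDerivAt (deriv v) (deriv (deriv v) x) x := (hv2 x hx).hasDerivAt
    have hd : HasDerivAt u (1 * deriv v x + x * deriv (deriv v) x - b * deriv v x) x :=
      ((hasDerivAt_id x).mul h2).sub (h1.const_mul b)
    convert hd using 1
    have hode' := hode x hx
    field_simp [hu_def]
    linear_combination (-2 : ℝ) * hode' + (x * deriv v x) * hab - v x * hmul
  -- g = u * x^(-a) has zero derivative
  set c : ℝ := u x₀ * x₀ ^ (-a) with hc_def
  have hu_eq : ∀ x ∈ Set.Ioc (0:ℝ) x₀, u x = c * x ^ a := by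
    have hg : ∀ x ∈ Set.Ioc (0:ℝ) x₀,
        HasDerivAt (fun y => u y * y ^ (-a)) 0 x := by
      intro x hx
      have hxpos : (0:ℝ) < x := hx.1
      have hrp : HasDerivAt (fun y : ℝ => y ^ (-a)) (-a * x ^ (-a - 1)) x :=
        Real.hasDerivAt_rpow_const (Or.inl hxpos.ne')
      have hd := (hu x hx).mul hrp
      refine hd.congr_deriv ?_
      symm
      have h1 : x ^ (-a - 1) = x ^ (-a) / x := by
        rw [Real.rpow_sub hxpos, Real.rpow_one]
      rw [h1]
      field_simp
      ring
    intro x hx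
    have := const_on_Ioc' hx₀ _ hg x hx
    have hxa : (0:ℝ) < x ^ a := Real.rpow_pos_of_pos hx.1 a
    have hxna : x ^ (-a) * x ^ a = 1 := by
      rw [← Real.rpow_add hx.1]; simp
    calc u x = u x * x ^ (-a) * x ^ a := by rw [mul_assoc, hxna]; ring
    _ = u x₀ * x₀ ^ (-a) * x ^ a := by rw [this]
    _ = c * x ^ a := rfl
  -- h = v * x^(-b) - (c/s) x^s has zero derivative
  have hs0 : (0:ℝ) < s := by linarith
  have hsab : s = a - b := by simp [ha_def, hb_def, mUp, mDown]; ring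
  set d : ℝ := v x₀ * x₀ ^ (-b) - c / s * x₀ ^ s with hd_def
  have hv_eq : ∀ x ∈ Set.Ioc (0:ℝ) x₀, v x = c / s * x ^ a + d * x ^ b := by
    have hh : ∀ x ∈ Set.Ioc (0:ℝ) x₀,
        HasDerivAt (fun y => v y * y ^ (-b) - c / s * y ^ s) 0 x := by
      intro x hx
      have hxpos : (0:ℝ) < x := hx.1
      have hrp : HasDerivAt (fun y : ℝ => y ^ (-b)) (-b * x ^ (-b - 1)) x :=
        Real.hasDerivAt_rpow_const (Or.inl hxpos.ne')
      have hrs : HasDerivAt (fun y : ℝ => y ^ s) (s * x ^ (s - 1)) x :=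
        Real.hasDerivAt_rpow_const (Or.inl hxpos.ne')
      have hd := (((hv1 x hx).hasDerivAt.mul hrp).sub ((hrs.const_mul (c / s))))
      refine hd.congr_deriv ?_
      symm
      have hP1 : x ^ (-b) = x * x ^ (-b - 1) := by
        have h := (Real.rpow_add hxpos 1 (-b - 1)).symm
        rw [Real.rpow_one] at h
        rw [h]; congr 1; ring
      have hP2 : x ^ (s - 1) = x ^ a * x ^ (-b - 1) := by
        rw [← Real.rpow_add hxpos]; congr 1; rw [hsab]; ring
      have h5 : x * deriv v x - b * v x = c * x ^ a := hu_eq x hx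
      have hc5 : c / s * (s * x ^ (s - 1)) = c * x ^ (s - 1) := by
        field_simp
      rw [hc5, hP1, hP2]
      linear_combination (-(x ^ (-b - 1))) * h5
    intro x hx
    have hkey := const_on_Ioc' hx₀ _ hh x hx
    have hxb : x ^ (-b) * x ^ b = 1 := by rw [← Real.rpow_add hx.1]; simp
    have hsb : x ^ s * x ^ b = x ^ a := by
      rw [← Real.rpow_add hx.1, hsab]; congr 1; ring
    have : v x * x ^ (-b) = c / s * x ^ s + d := by
      rw [hd_def]; linarith [hkey]
    calc v x = v x * x ^ (-b) * x ^ b := by rw [mul_assoc, hxb]; ring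
    _ = (c / s * x ^ s + d) * x ^ b := by rw [this]
    _ = c / s * x ^ a + d * x ^ b := by rw [add_mul, mul_assoc, hsb]
  -- boundedness forces d = 0
  have hd0 : d = 0 := by
    by_contra hd0
    have hM0 : 0 ≤ M := (abs_nonneg _).trans (hM x₀ ⟨hx₀, le_refl _⟩)
    set K : ℝ := M + |c / s| * x₀ ^ a with hK_def
    have hK0 : 0 ≤ K := by
      have h9 : 0 ≤ |c / s| * x₀ ^ a :=
        mul_nonneg (abs_nonneg _) (Real.rpow_pos_of_pos hx₀ a).le
      rw [hK_def]; linarith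
    set x : ℝ := min x₀ (min 1 (|d| / (K + 1))) with hx_def
    have hdpos : 0 < |d| := abs_pos.mpr hd0
    have hxpos : 0 < x := by
      apply lt_min hx₀
      exact lt_min one_pos (div_pos hdpos (by linarith))
    have hxmem : x ∈ Set.Ioc (0:ℝ) x₀ := ⟨hxpos, min_le_left _ _⟩
    have hx1 : x ≤ 1 := le_trans (min_le_right _ _) (min_le_left _ _)
    have hxd : x ≤ |d| / (K + 1) := le_trans (min_le_right _ _) (min_le_right _ _)
    -- x^b ≥ 1/x
    have hxb : x ^ (-1 : ℝ) ≤ x ^ b :=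
      Real.rpow_le_rpow_of_exponent_ge hxpos hx1 (by linarith)
    have hxkd : x * (K + 1) ≤ |d| := (le_div_iff₀ (by linarith)).mp hxd
    have hxb' : (K + 1) / |d| ≤ x ^ b := by
      calc (K + 1) / |d| ≤ 1 / x := by
            rw [div_le_div_iff₀ hdpos hxpos]; linarith
      _ = x ^ (-1 : ℝ) := by rw [Real.rpow_neg_one]; exact one_div x
      _ ≤ x ^ b := hxb
    have hxa : x ^ a ≤ x₀ ^ a :=
      Real.rpow_le_rpow hxpos.le hxmem.2 ha0.le
    have hveq := hv_eq x hxmem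
    have habs : |v x| ≥ |d| * x ^ b - |c / s| * x ^ a := by
      rw [hveq]
      have := abs_sub_abs_le_abs_sub (d * x ^ b) (-(c / s * x ^ a))
      simp only [abs_neg, sub_neg_eq_add] at this
      rw [abs_mul, abs_mul] at this
      have hxb0 : 0 ≤ x ^ b := (Real.rpow_pos_of_pos hxpos b).le
      have hxa0 : 0 ≤ x ^ a := (Real.rpow_pos_of_pos hxpos a).le
      calc |d| * x ^ b - |c / s| * x ^ a
          = |d| * |x ^ b| - |c / s| * |x ^ a| := by rw [abs_of_nonneg hxb0, abs_of_nonneg hxa0]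
      _ ≤ |d * x ^ b + c / s * x ^ a| := this
      _ = |c / s * x ^ a + d * x ^ b| := by ring_nf
    have hlarge : |d| * x ^ b ≥ K + 1 := by
      have := mul_le_mul_of_nonneg_left hxb' hdpos.le
      rwa [mul_div_cancel₀ _ hdpos.ne'] at this
    have hsmall : |c / s| * x ^ a ≤ |c / s| * x₀ ^ a :=
      mul_le_mul_of_nonneg_left hxa (abs_nonneg _)
    have := hM x hxmem
    rw [hK_def] at hlarge
    linarith [habs]
  refine ⟨c / s, fun x hx => ?_⟩
  rw [hv_eq x hx, hd0]
  simp [ha_def]
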